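/- Let ν, μ, μ₁, μ₂, ... be Borel probability measures on ℝ^m with μ full, let (a_n) be a sequence in ℝ^m and (A_n) a sequence of real m×m matrices. If μ_n → μ weakly and (A_n μ_n) ∗ ε_{a_n} → ν weakly as n → ∞, then both sequences (‖A_n‖)_{n∈ℕ} (operator norms) and (‖a_n‖)_{n∈ℕ} are bounded. -/

import Mathlib

open MeasureTheory Filter Topology Matrix
open scoped RealInnerProductSpace ENNReal NNReal

noncomputable section

abbrev Vec (m : ℕ) := EuclideanSpace ℝ (Fin m)

/-- The continuous linear map on Euclidean space induced by a matrix. -/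
def mulVecL {m : ℕ} (A : Matrix (Fin m) (Fin m) ℝ) : Vec m →L[ℝ] Vec m :=
  LinearMap.toContinuousLinearMap (Matrix.toEuclideanLin A)

/-- Operator norm of a matrix (induced by the Euclidean norm). -/
def opNorm {m : ℕ} (A : Matrix (Fin m) (Fin m) ℝ) : ℝ := ‖mulVecL A‖

/-- Fullness of a measure on `ℝ^m`: not concentrated on any proper affine hyperplane. -/
def IsFull {m : ℕ} (μ : Measure (Vec m)) : Prop :=
  ∀ u : Vec m, u ≠ 0 → ∀ c : ℝ, μ {x | ⟪u, x⟫ = c} < 1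

/-- Weak convergence of a sequence of (probability) measures on `ℝ^m`:
convergence of the integrals of all bounded continuous functions. -/
def WeakTendstoSeq {m : ℕ} (μs : ℕ → Measure (Vec m)) (μ : Measure (Vec m)) : Prop :=
  ∀ f : BoundedContinuousFunction (Vec m) ℝ,
    Tendsto (fun n => ∫ x, f x ∂(μs n)) atTop (𝓝 (∫ x, f x ∂μ))

namespace BddHelp
variable {m : ℕ}


variable {m : ℕ}

lemma conv_dirac_apply (μ : Measure (Vec m)) [IsProbabilityMeasure μ]
    (A : Matrix (Fin m) (Fin m) ℝ) (a : Vec m) {s : Set (Vec m)} (hs : MeasurableSet s) :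
    ((μ.map (mulVecL A)) ∗ Measure.dirac a) s = μ ((fun x => mulVecL A x + a) ⁻¹' s) := by
  have hT : Measurable (mulVecL A) := (mulVecL A).continuous.measurable
  have h1 : (μ.map (mulVecL A)) ∗ Measure.dirac a = μ.map (fun x => mulVecL A x + a) := by
    unfold Measure.conv
    rw [Measure.prod_dirac, Measure.map_map (by fun_prop) (by fun_prop),
        Measure.map_map (by fun_prop) hT]
    rfl
  rw [h1, Measure.map_apply (by fun_prop) hs]

lemma tail_small (μ : Measure (Vec m)) [IsProbabilityMeasure μ] {ε : ℝ≥0∞} (hε : 0 < ε) :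
    ∃ R : ℝ, 0 < R ∧ μ (Metric.ball (0 : Vec m) R)ᶜ < ε := by
  have hanti : Antitone (fun j : ℕ => (Metric.ball (0 : Vec m) j)ᶜ) := fun i j hij =>
    Set.compl_subset_compl.2 (Metric.ball_subset_ball (by exact_mod_cast hij))
  have hinter : ⋂ j : ℕ, (Metric.ball (0 : Vec m) j)ᶜ = ∅ := by
    ext x
    simp only [Set.mem_iInter, Set.mem_compl_iff, Metric.mem_ball, Set.mem_empty_iff_false,
      iff_false, not_forall, not_not]
    obtain ⟨j, hj⟩ := exists_nat_gt (dist x 0)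
    exact ⟨j, hj⟩
  have htt := MeasureTheory.tendsto_measure_iInter_atTop (μ := μ)
    (fun j => (Metric.isOpen_ball.measurableSet.compl).nullMeasurableSet) hanti
    ⟨0, measure_ne_top μ _⟩
  rw [hinter, measure_empty] at htt
  obtain ⟨j, hj1, hj2⟩ := ((eventually_ge_atTop 1).and (htt.eventually_lt_const hε)).exists
  exact ⟨j, by exact_mod_cast hj1, hj2⟩

lemma eventually_tail_small {μ : ProbabilityMeasure (Vec m)} {μs : ℕ → ProbabilityMeasure (Vec m)}
    (h : Tendsto μs atTop (𝓝 μ)) {ε : ℝ≥0∞} (hε : 0 < ε) :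
    ∃ R : ℝ, 0 < R ∧ ∀ᶠ n in atTop, (μs n : Measure (Vec m)) (Metric.ball (0 : Vec m) R)ᶜ < ε := by
  obtain ⟨R, hR, hμ⟩ := tail_small (μ : Measure (Vec m)) hε
  have hcl : IsClosed (Metric.ball (0 : Vec m) R)ᶜ := Metric.isOpen_ball.isClosed_compl
  have hls := ProbabilityMeasure.limsup_measure_closed_le_of_tendsto h hcl
  exact ⟨R, hR, eventually_lt_of_limsup_lt (lt_of_le_of_lt hls hμ)⟩

lemma nonempty_inter {α : Type*} [MeasurableSpace α] (μ : Measure α) [IsProbabilityMeasure μ]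
    {s t : Set α} (h : μ sᶜ + μ tᶜ < 1) : (s ∩ t).Nonempty := by
  by_contra h'
  rw [Set.not_nonempty_iff_eq_empty] at h'
  have h2 : μ (sᶜ ∪ tᶜ) = 1 := by
    rw [← Set.compl_inter, h', Set.compl_empty, measure_univ]
  exact absurd (measure_union_le sᶜ tᶜ) (by rw [h2]; exact not_le.2 h)

lemma bdd_of_eventually {f : ℕ → ℝ} {C : ℝ} (h : ∀ᶠ n in atTop, f n ≤ C) :
    ∃ C', ∀ n, f n ≤ C' := by
  obtain ⟨N, hN⟩ := eventually_atTop.1 h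
  refine ⟨max C ((Finset.range (N + 1)).sup' ⟨0, by simp⟩ f), fun n => ?_⟩
  rcases le_or_gt N n with h' | h'
  · exact (hN n h').trans (le_max_left _ _)
  · exact (Finset.le_sup' f (Finset.mem_range.2 (by omega))).trans (le_max_right _ _)

lemma exists_max_vector (hm : 0 < m) (T : Vec m →L[ℝ] Vec m) :
    ∃ v : Vec m, ‖v‖ = 1 ∧ ‖T v‖ = ‖T‖ := by
  have hv0 : ‖(EuclideanSpace.single (⟨0, hm⟩ : Fin m) (1 : ℝ) : Vec m)‖ = 1 := by
    rw [EuclideanSpace.norm_single]; norm_num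
  obtain ⟨v, hv, hmax⟩ := (isCompact_sphere (0 : Vec m) 1).exists_isMaxOn
    ⟨_, by rw [mem_sphere_zero_iff_norm]; exact hv0⟩
    ((continuous_norm.comp T.continuous).continuousOn)
  rw [mem_sphere_zero_iff_norm] at hv
  have hle : ‖T v‖ ≤ ‖T‖ := by
    have := T.le_opNorm v
    rwa [hv, mul_one] at this
  refine ⟨v, hv, le_antisymm hle ?_⟩
  refine ContinuousLinearMap.opNorm_le_bound T (norm_nonneg (T v)) fun x => ?_
  rcases eq_or_ne x 0 with rfl | hx
  · simp
  · have hxn : (0 : ℝ) < ‖x‖ := norm_pos_iff.2 hx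
    have hy : (‖x‖⁻¹ • x) ∈ Metric.sphere (0 : Vec m) 1 := by
      rw [mem_sphere_zero_iff_norm, norm_smul, norm_inv, norm_norm]
      field_simp
    have h1 : ‖T (‖x‖⁻¹ • x)‖ ≤ ‖T v‖ := hmax hy
    rw [ContinuousLinearMap.map_smul, norm_smul, norm_inv, norm_norm] at h1
    calc ‖T x‖ = ‖x‖ * (‖x‖⁻¹ * ‖T x‖) := by field_simp
    _ ≤ ‖x‖ * ‖T v‖ := mul_le_mul_of_nonneg_left h1 hxn.le
    _ = ‖T v‖ * ‖x‖ := mul_comm _ _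

lemma slab_meas (u : Vec m) (c δ : ℝ) : MeasurableSet {x : Vec m | |⟪u, x⟫ - c| ≤ δ} := by
  have hcont : Continuous fun x : Vec m => |⟪u, x⟫ - c| :=
    ((continuous_const.inner continuous_id).sub continuous_const).abs
  exact (isClosed_le hcont continuous_const).measurableSet

lemma uniform_nonconc (μ : Measure (Vec m)) [IsProbabilityMeasure μ]
    (hfull : IsFull μ) (hm : 0 < m) :
    ∃ ε : ℝ≥0∞, 0 < ε ∧ ∃ δ : ℝ, 0 < δ ∧ ∀ u : Vec m, ‖u‖ = 1 → ∀ c : ℝ,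
      ε ≤ μ {x | |⟪u, x⟫ - c| ≤ δ}ᶜ := by
  by_contra hcon
  push_neg at hcon
  have hsel : ∀ k : ℕ, ∃ u : Vec m, ‖u‖ = 1 ∧ ∃ c : ℝ,
      μ {x | |⟪u, x⟫ - c| ≤ 1 / (k + 1)}ᶜ < ((k : ℝ≥0∞) + 1)⁻¹ := by
    intro k
    refine hcon ((k : ℝ≥0∞) + 1)⁻¹ (ENNReal.inv_pos.2 ?_) (1 / (k + 1)) (by positivity)
    exact ENNReal.add_ne_top.2 ⟨ENNReal.natCast_ne_top k, ENNReal.one_ne_top⟩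
  choose u hu c hc using hsel
  obtain ⟨R₀, hR₀pos, hR₀⟩ := tail_small μ (ε := 2⁻¹) (by norm_num)
  have hSbig : ∀ k : ℕ, 1 - ((k : ℝ≥0∞) + 1)⁻¹ ≤ μ {x | |⟪u k, x⟫ - c k| ≤ 1 / (k + 1)} := by
    intro k
    have h1 : μ {x | |⟪u k, x⟫ - c k| ≤ 1 / (k + 1)} =
        1 - μ {x | |⟪u k, x⟫ - c k| ≤ 1 / (k + 1)}ᶜ := by
      rw [← prob_compl_eq_one_sub (slab_meas _ _ _).compl, compl_compl]
    rw [h1]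
    exact tsub_le_tsub_left (hc k).le 1
  have hcb : ∀ k : ℕ, 1 ≤ k → |c k| ≤ R₀ + 1 := by
    intro k hk
    by_contra hck
    push_neg at hck
    have hsub : {x : Vec m | |⟪u k, x⟫ - c k| ≤ 1 / (k + 1)} ⊆ (Metric.ball (0 : Vec m) R₀)ᶜ := by
      intro x hx
      simp only [Set.mem_setOf_eq] at hx
      simp only [Set.mem_compl_iff, Metric.mem_ball, dist_zero_right, not_lt]
      have h2 : |⟪u k, x⟫| ≤ ‖x‖ := by
        have := abs_real_inner_le_norm (u k) x
        rwa [hu k, one_mul] at this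
      have h3 : (1 : ℝ) / (k + 1) ≤ 1 := by
        rw [div_le_one (by positivity)]; norm_num
      have h4 : |c k| ≤ |⟪u k, x⟫| + 1 := by
        have := abs_sub_abs_le_abs_sub (c k) (⟪u k, x⟫)
        have h5 : |c k - ⟪u k, x⟫| ≤ 1 := by
          rw [abs_sub_comm]; exact hx.trans h3
        linarith
      linarith
    have hhalf : (2 : ℝ≥0∞)⁻¹ ≤ μ {x | |⟪u k, x⟫ - c k| ≤ 1 / (k + 1)} := by
      refine le_trans ?_ (hSbig k)
      have h6 : ((k : ℝ≥0∞) + 1)⁻¹ ≤ 2⁻¹ := by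
        apply ENNReal.inv_le_inv.2
        have h7 : (1 : ℝ≥0∞) ≤ (k : ℝ≥0∞) := by exact_mod_cast hk
        calc (2 : ℝ≥0∞) = 1 + 1 := by norm_num
        _ ≤ (k : ℝ≥0∞) + 1 := add_le_add_left h7 1
      calc (2 : ℝ≥0∞)⁻¹ = 1 - 2⁻¹ := ENNReal.one_sub_inv_two.symm
      _ ≤ 1 - ((k : ℝ≥0∞) + 1)⁻¹ := tsub_le_tsub_left h6 1
    exact lt_irrefl _ (lt_of_le_of_lt (hhalf.trans (measure_mono hsub)) hR₀)
  have hmem : ∀ k : ℕ, (u (k + 1), c (k + 1)) ∈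
      (Metric.sphere (0 : Vec m) 1) ×ˢ (Set.Icc (-(R₀ + 1)) (R₀ + 1)) := by
    intro k
    constructor
    · show u (k + 1) ∈ Metric.sphere (0 : Vec m) 1
      rw [mem_sphere_zero_iff_norm]; exact hu (k + 1)
    · exact Set.mem_Icc.2 (abs_le.1 (hcb (k + 1) (by omega)))
  obtain ⟨⟨uL, cL⟩, hmemL, φ, hφ, hconv⟩ :=
    ((isCompact_sphere (0 : Vec m) 1).prod isCompact_Icc).tendsto_subseq hmem
  have huL : ‖uL‖ = 1 := mem_sphere_zero_iff_norm.1 hmemL.1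
  have huconv : Tendsto (fun k => u (φ k + 1)) atTop (𝓝 uL) :=
    (continuous_fst.tendsto _).comp hconv
  have hcconv : Tendsto (fun k => c (φ k + 1)) atTop (𝓝 cL) :=
    (continuous_snd.tendsto _).comp hconv
  have hfullslab : ∀ δ : ℝ, 0 < δ → μ {x : Vec m | |⟪uL, x⟫ - cL| ≤ δ}ᶜ = 0 := by
    intro δ hδ
    refine le_antisymm ?_ zero_le
    refine ENNReal.le_of_forall_pos_le_add fun γ hγ _ => ?_
    rw [zero_add]
    have hγ2 : (0 : ℝ≥0∞) < (γ : ℝ≥0∞) / 2 :=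
      ENNReal.div_pos (by exact_mod_cast hγ.ne') (by norm_num)
    obtain ⟨R, hRpos, hR⟩ := tail_small μ hγ2
    have e1 : ∀ᶠ k in atTop, ‖u (φ k + 1) - uL‖ < δ / (3 * R) := by
      obtain ⟨N, hN⟩ := Metric.tendsto_atTop.1 huconv (δ / (3 * R)) (by positivity)
      filter_upwards [eventually_ge_atTop N] with k hk
      have := hN k hk
      rwa [dist_eq_norm] at this
    have e2 : ∀ᶠ k in atTop, |c (φ k + 1) - cL| < δ / 3 := by
      obtain ⟨N, hN⟩ := Metric.tendsto_atTop.1 hcconv (δ / 3) (by positivity)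
      filter_upwards [eventually_ge_atTop N] with k hk
      have := hN k hk
      rwa [Real.dist_eq] at this
    have e3 : ∀ᶠ k in atTop, (1 : ℝ) / ((φ k + 1 : ℕ) + 1) < δ / 3 := by
      obtain ⟨K, hK⟩ := exists_nat_gt (3 / δ)
      filter_upwards [eventually_ge_atTop K] with k hk
      have hφk : (K : ℝ) ≤ φ k := by exact_mod_cast le_trans hk hφ.le_apply
      rw [div_lt_iff₀ (by positivity)]
      rw [div_lt_iff₀ hδ] at hK
      have h8 : (3 : ℝ) < δ * ((φ k + 1 : ℕ) + 1) := by
        push_cast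
        nlinarith [hK, hφk, hδ]
      linarith
    have e4 : ∀ᶠ k in atTop, (((φ k + 1 : ℕ) : ℝ≥0∞) + 1)⁻¹ < (γ : ℝ≥0∞) / 2 := by
      obtain ⟨n, hn⟩ := ENNReal.exists_inv_nat_lt hγ2.ne'
      filter_upwards [eventually_ge_atTop n] with k hk
      refine lt_of_le_of_lt ?_ hn
      apply ENNReal.inv_le_inv.2
      have h9 : (n : ℝ≥0∞) ≤ ((φ k + 1 : ℕ) : ℝ≥0∞) := by
        exact_mod_cast le_trans hk (Nat.le_succ_of_le hφ.le_apply)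
      exact h9.trans le_self_add
    obtain ⟨k, h1, h2, h3, h4⟩ := (e1.and (e2.and (e3.and e4))).exists
    have hsubset : {x : Vec m | |⟪u (φ k + 1), x⟫ - c (φ k + 1)| ≤ 1 / ((φ k + 1 : ℕ) + 1)}
        ∩ Metric.ball (0 : Vec m) R ⊆ {x : Vec m | |⟪uL, x⟫ - cL| ≤ δ} := by
      rintro x ⟨hxS, hxB⟩
      simp only [Set.mem_setOf_eq] at hxS ⊢
      rw [Metric.mem_ball, dist_zero_right] at hxB
      have t1 : |⟪uL - u (φ k + 1), x⟫| ≤ ‖uL - u (φ k + 1)‖ * ‖x‖ := abs_real_inner_le_norm _ _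
      have t1' : ‖uL - u (φ k + 1)‖ * ‖x‖ ≤ δ / (3 * R) * R := by
        refine mul_le_mul ?_ hxB.le (norm_nonneg _) (by positivity)
        rw [norm_sub_rev]; exact h1.le
      have hd3 : δ / (3 * R) * R = δ / 3 := by field_simp
      have hiden : ⟪uL, x⟫ - cL =
          ⟪uL - u (φ k + 1), x⟫ + (⟪u (φ k + 1), x⟫ - c (φ k + 1)) + (c (φ k + 1) - cL) := by
        rw [inner_sub_left]; ring
      calc |⟪uL, x⟫ - cL| ≤ |⟪uL - u (φ k + 1), x⟫| + |⟪u (φ k + 1), x⟫ - c (φ k + 1)|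
            + |c (φ k + 1) - cL| := by
            rw [hiden]; exact (abs_add_le _ _).trans (add_le_add_left (abs_add_le _ _) _)
      _ ≤ δ / 3 + δ / 3 + δ / 3 := by
            refine add_le_add (add_le_add (t1.trans (t1'.trans_eq hd3)) ?_) h2.le
            exact hxS.trans h3.le
      _ = δ := by ring
    have hGc : {x : Vec m | |⟪uL, x⟫ - cL| ≤ δ}ᶜ ⊆
        {x : Vec m | |⟪u (φ k + 1), x⟫ - c (φ k + 1)| ≤ 1 / ((φ k + 1 : ℕ) + 1)}ᶜ
        ∪ (Metric.ball (0 : Vec m) R)ᶜ := by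
      rw [← Set.compl_inter]
      exact Set.compl_subset_compl.2 hsubset
    calc μ {x : Vec m | |⟪uL, x⟫ - cL| ≤ δ}ᶜ
        ≤ μ {x : Vec m | |⟪u (φ k + 1), x⟫ - c (φ k + 1)| ≤ 1 / ((φ k + 1 : ℕ) + 1)}ᶜ
          + μ (Metric.ball (0 : Vec m) R)ᶜ := (measure_mono hGc).trans (measure_union_le _ _)
    _ ≤ (γ : ℝ≥0∞) / 2 + (γ : ℝ≥0∞) / 2 := by
          refine add_le_add (le_trans ?_ h4.le) hR.le
          exact_mod_cast (hc (φ k + 1)).le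
    _ = (γ : ℝ≥0∞) := ENNReal.add_halves _
  have hHc : μ {x : Vec m | ⟪uL, x⟫ = cL}ᶜ = 0 := by
    have hsub : {x : Vec m | ⟪uL, x⟫ = cL}ᶜ ⊆
        ⋃ j : ℕ, {x : Vec m | |⟪uL, x⟫ - cL| ≤ 1 / (j + 1)}ᶜ := by
      intro x hx
      simp only [Set.mem_compl_iff, Set.mem_setOf_eq] at hx
      have habs : 0 < |⟪uL, x⟫ - cL| := abs_pos.2 (sub_ne_zero.2 hx)
      obtain ⟨j, hj⟩ := exists_nat_one_div_lt habs
      refine Set.mem_iUnion.2 ⟨j, ?_⟩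
      simp only [Set.mem_compl_iff, Set.mem_setOf_eq, not_le]
      exact_mod_cast hj
    have hz : ∀ j : ℕ, μ {x : Vec m | |⟪uL, x⟫ - cL| ≤ 1 / (j + 1)}ᶜ = 0 := fun j =>
      hfullslab _ (by positivity)
    refine le_antisymm (le_trans (measure_mono hsub) (le_trans (measure_iUnion_le _) ?_))
      zero_le
    exact le_of_eq (ENNReal.tsum_eq_zero.2 hz)
  have hone : μ {x : Vec m | ⟪uL, x⟫ = cL} = 1 := by
    have hmeas : MeasurableSet {x : Vec m | ⟪uL, x⟫ = cL} := by
      have hcont : Continuous fun x : Vec m => ⟪uL, x⟫ := continuous_const.inner continuous_id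
      exact (isClosed_eq hcont continuous_const).measurableSet
    have h10 := prob_compl_eq_one_sub (μ := μ) hmeas
    rw [hHc] at h10
    have h12 : (1 : ℝ≥0∞) ≤ μ {x : Vec m | ⟪uL, x⟫ = cL} := tsub_eq_zero_iff_le.1 h10.symm
    exact le_antisymm prob_le_one h12
  exact absurd hone (hfull uL (fun h => by rw [h, norm_zero] at huL; norm_num at huL) cL).ne


end BddHelp

/-- If `μₙ → μ` weakly with `μ` full and `(Aₙ μₙ) ∗ ε_{aₙ} → ν` weakly,
then both `(‖Aₙ‖)` (operator norms) and `(‖aₙ‖)` are bounded. -/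
theorem operators_and_shifts_bounded_of_weak_convergence {m : ℕ}
    (ν μ : Measure (Vec m)) (μs : ℕ → Measure (Vec m))
    (a : ℕ → Vec m) (A : ℕ → Matrix (Fin m) (Fin m) ℝ)
    [IsProbabilityMeasure ν] [IsProbabilityMeasure μ] [∀ n, IsProbabilityMeasure (μs n)]
    (hfull : IsFull μ)
    (h1 : WeakTendstoSeq μs μ)
    (h2 : WeakTendstoSeq
      (fun n => ((μs n).map (mulVecL (A n))) ∗ (Measure.dirac (a n))) ν) :
    (∃ C : ℝ, ∀ n, opNorm (A n) ≤ C) ∧ (∃ C : ℝ, ∀ n, ‖a n‖ ≤ C) := by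
  classical
  rcases Nat.eq_zero_or_pos m with hm0 | hm
  · subst hm0
    haveI : Subsingleton (Vec 0) := ⟨fun x y => by ext i; exact absurd i.2 (by omega)⟩
    constructor
    · refine ⟨0, fun n => le_of_eq ?_⟩
      have hz : mulVecL (A n) = 0 := ContinuousLinearMap.ext fun x => Subsingleton.elim _ _
      rw [opNorm, hz, norm_zero]
    · refine ⟨0, fun n => le_of_eq ?_⟩
      rw [Subsingleton.elim (a n) 0, norm_zero]
  -- main case
  have hTmeas : ∀ n, Measurable (mulVecL (A n)) := fun n => (mulVecL (A n)).continuous.measurable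
  set νs : ℕ → Measure (Vec m) := fun n => ((μs n).map (mulVecL (A n))) ∗ (Measure.dirac (a n))
    with hνsdef
  haveI hmap : ∀ n, IsProbabilityMeasure ((μs n).map (mulVecL (A n))) := fun n =>
    Measure.isProbabilityMeasure_map (hTmeas n).aemeasurable
  haveI hνinst : ∀ n, IsProbabilityMeasure (νs n) := fun n => by
    rw [hνsdef]; infer_instance
  let P : ℕ → ProbabilityMeasure (Vec m) := fun n => ⟨μs n, inferInstance⟩
  let Pl : ProbabilityMeasure (Vec m) := ⟨μ, inferInstance⟩
  let Q : ℕ → ProbabilityMeasure (Vec m) := fun n => ⟨νs n, hνinst n⟩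
  let Ql : ProbabilityMeasure (Vec m) := ⟨ν, inferInstance⟩
  have hP : Tendsto P atTop (𝓝 Pl) := ProbabilityMeasure.tendsto_iff_forall_integral_tendsto.2 h1
  have hQ : Tendsto Q atTop (𝓝 Ql) := ProbabilityMeasure.tendsto_iff_forall_integral_tendsto.2 h2
  -- evaluation of νs on measurable sets
  have hνap : ∀ n (s : Set (Vec m)), MeasurableSet s →
      νs n s = μs n ((fun x => mulVecL (A n) x + a n) ⁻¹' s) := fun n s hs =>
    BddHelp.conv_dirac_apply (μs n) (A n) (a n) hs
  -- uniform non-concentration constants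
  obtain ⟨ε₀, hε₀, δ, hδ, hL1⟩ := BddHelp.uniform_nonconc μ hfull hm
  set ε : ℝ≥0∞ := min ε₀ 1 with hεdef
  have hεpos : 0 < ε := lt_min hε₀ zero_lt_one
  have hεle1 : ε ≤ 1 := min_le_right _ _
  have hεtop : ε ≠ ⊤ := (lt_of_le_of_lt hεle1 ENNReal.one_lt_top).ne
  have hL1' : ∀ u : Vec m, ‖u‖ = 1 → ∀ c : ℝ, ε ≤ μ {x | |⟪u, x⟫ - c| ≤ δ}ᶜ :=
    fun u hu c => (min_le_left _ _).trans (hL1 u hu c)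
  set ε' : ℝ≥0∞ := ε / 4 with hε'def
  have hε'pos : 0 < ε' := ENNReal.div_pos hεpos.ne' (by norm_num)
  have hsum_lt_one : ε' + ε' < 1 := by
    have h4 : ε' ≤ 1 / 4 := ENNReal.div_le_div_right hεle1 4
    calc ε' + ε' ≤ 1 / 4 + 1 / 4 := add_le_add h4 h4
    _ = 2 / 4 := by rw [ENNReal.div_add_div_same]; norm_num
    _ < 1 := by rw [ENNReal.div_lt_iff (by norm_num) (by norm_num)]; norm_num
  -- tail bounds
  obtain ⟨R1, hR1pos, hR1⟩ := BddHelp.eventually_tail_small hP hε'pos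
  obtain ⟨R2, hR2pos, hR2⟩ := BddHelp.eventually_tail_small hQ hε'pos
  have hR1' : ∀ᶠ n in atTop, μs n (Metric.ball (0 : Vec m) R1)ᶜ < ε' := hR1
  have hR2' : ∀ᶠ n in atTop, νs n (Metric.ball (0 : Vec m) R2)ᶜ < ε' := hR2
  obtain ⟨N1, hN1⟩ := eventually_atTop.1 hR1'
  obtain ⟨N2, hN2⟩ := eventually_atTop.1 hR2'
  set N : ℕ := max N1 N2 with hNdef
  -- Part A: operator norms bounded
  have hA : ∃ C : ℝ, ∀ n, opNorm (A n) ≤ C := by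
    by_contra hC
    push_neg at hC
    -- selection of bad indices
    have hsel : ∀ k : ℕ, ∃ n, max N k ≤ n ∧ (k : ℝ) < opNorm (A n) := by
      intro k
      obtain ⟨n, hn⟩ := hC ((k : ℝ) + ∑ j ∈ Finset.range (max N k), |opNorm (A j)|)
      have hsum : (0 : ℝ) ≤ ∑ j ∈ Finset.range (max N k), |opNorm (A j)| :=
        Finset.sum_nonneg fun j _ => abs_nonneg _
      refine ⟨n, ?_, lt_of_le_of_lt (le_add_of_nonneg_right hsum) hn⟩
      by_contra hlt
      push_neg at hlt
      have h5 : opNorm (A n) ≤ ∑ j ∈ Finset.range (max N k), |opNorm (A j)| :=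
        (le_abs_self _).trans
          (Finset.single_le_sum (fun j _ => abs_nonneg (opNorm (A j)))
            (Finset.mem_range.2 hlt))
      have hk0 : (0 : ℝ) ≤ (k : ℝ) := Nat.cast_nonneg k
      linarith
    choose f hfN hfk using hsel
    set g : ℕ → ℕ := fun k => f (k + 1) with hgdef
    have hgN : ∀ k, N ≤ g k := fun k => (le_max_left _ _).trans (hfN (k + 1))
    have hgk : ∀ k, k ≤ g k := fun k =>
      le_trans (by omega : k ≤ max N (k + 1)) (hfN (k + 1))
    set t : ℕ → ℝ := fun k => opNorm (A (g k)) with htdef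
    have htk : ∀ k : ℕ, (k : ℝ) + 1 < t k := by
      intro k
      have h := hfk (k + 1)
      push_cast at h
      exact h
    have htpos : ∀ k, (0 : ℝ) < t k := fun k => lt_of_le_of_lt (by positivity) (htk k)
    have ht1 : ∀ k, (1 : ℝ) ≤ t k := fun k => by
      have h := htk k
      have h2 : (0 : ℝ) ≤ (k : ℝ) := Nat.cast_nonneg k
      linarith
    -- norm-attaining vectors for the adjoints
    have hvsel : ∀ k, ∃ v : Vec m, ‖v‖ = 1 ∧
        ‖ContinuousLinearMap.adjoint (mulVecL (A (g k))) v‖ = t k := by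
      intro k
      obtain ⟨v, hv1, hv2⟩ := BddHelp.exists_max_vector hm
        (ContinuousLinearMap.adjoint (mulVecL (A (g k))))
      refine ⟨v, hv1, hv2.trans ?_⟩
      exact LinearIsometryEquiv.norm_map ContinuousLinearMap.adjoint (mulVecL (A (g k)))
    choose v hv1 hv2 using hvsel
    set w : ℕ → Vec m := fun k =>
      (t k)⁻¹ • (ContinuousLinearMap.adjoint (mulVecL (A (g k))) (v k)) with hwdef
    have hwnorm : ∀ k, ‖w k‖ = 1 := by
      intro k
      rw [hwdef]
      simp only [norm_smul, norm_inv, Real.norm_eq_abs, abs_of_pos (htpos k), hv2 k]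
      exact inv_mul_cancel₀ (htpos k).ne'
    set c : ℕ → ℝ := fun k => ⟪v k, a (g k)⟫ with hcdef
    set d : ℕ → ℝ := fun k => -(c k) / t k with hddef
    -- pointwise identity
    have hkey : ∀ k (x : Vec m),
        ⟪v k, mulVecL (A (g k)) x + a (g k)⟫ = t k * ⟪w k, x⟫ + c k := by
      intro k x
      rw [inner_add_right]
      congr 1
      rw [← ContinuousLinearMap.adjoint_inner_left]
      have hsm : ContinuousLinearMap.adjoint (mulVecL (A (g k))) (v k) = (t k) • w k := by
        rw [hwdef]
        simp only [smul_smul, mul_inv_cancel₀ (htpos k).ne', one_smul]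
      rw [hsm, real_inner_smul_left]
    -- the event E k has small complement
    set E : ℕ → Set (Vec m) := fun k => {x : Vec m | |⟪w k, x⟫ - d k| ≤ R2 / t k} with hEdef
    have hEc : ∀ k, μs (g k) (E k)ᶜ < ε' := by
      intro k
      have hsub : (E k)ᶜ ⊆ (fun x => mulVecL (A (g k)) x + a (g k)) ⁻¹'
          (Metric.ball (0 : Vec m) R2)ᶜ := by
        intro x hx
        simp only [hEdef, Set.mem_compl_iff, Set.mem_setOf_eq, not_le] at hx
        simp only [Set.mem_preimage, Set.mem_compl_iff, Metric.mem_ball, dist_zero_right, not_lt]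
        have h6 : R2 < t k * |⟪w k, x⟫ - d k| := by
          rw [← div_lt_iff₀' (htpos k)]
          exact hx
        have hcd : t k * d k = -(c k) := by
          rw [hddef]
          field_simp
          rw [mul_div_cancel_left₀ _ (htpos k).ne']
        have h7 : |⟪v k, mulVecL (A (g k)) x + a (g k)⟫| = t k * |⟪w k, x⟫ - d k| := by
          rw [hkey k x]
          have h7a : t k * ⟪w k, x⟫ + c k = t k * (⟪w k, x⟫ - d k) := by
            rw [mul_sub, hcd]; ring
          rw [h7a, abs_mul, abs_of_pos (htpos k)]
        have h8 : |⟪v k, mulVecL (A (g k)) x + a (g k)⟫| ≤ ‖mulVecL (A (g k)) x + a (g k)‖ := by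
          have h := abs_real_inner_le_norm (v k) (mulVecL (A (g k)) x + a (g k))
          rwa [hv1 k, one_mul] at h
        linarith
      calc μs (g k) (E k)ᶜ ≤ μs (g k) ((fun x => mulVecL (A (g k)) x + a (g k)) ⁻¹'
            (Metric.ball (0 : Vec m) R2)ᶜ) := measure_mono hsub
      _ = νs (g k) (Metric.ball (0 : Vec m) R2)ᶜ :=
          (hνap (g k) _ Metric.isOpen_ball.measurableSet.compl).symm
      _ < ε' := hN2 (g k) ((le_max_right N1 N2).trans (hgN k))
    have hBc : ∀ k, μs (g k) (Metric.ball (0 : Vec m) R1)ᶜ < ε' :=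
      fun k => hN1 (g k) ((le_max_left N1 N2).trans (hgN k))
    -- d is bounded
    have hdbd : ∀ k, d k ∈ Set.Icc (-(R1 + R2)) (R1 + R2) := by
      intro k
      have hne : (E k ∩ Metric.ball (0 : Vec m) R1).Nonempty :=
        BddHelp.nonempty_inter (μs (g k))
          (lt_of_le_of_lt (add_le_add (hEc k).le (hBc k).le) hsum_lt_one)
      obtain ⟨x, hxE, hxB⟩ := hne
      simp only [hEdef, Set.mem_setOf_eq] at hxE
      rw [Metric.mem_ball, dist_zero_right] at hxB
      have h9 : |⟪w k, x⟫| ≤ ‖x‖ := by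
        have h := abs_real_inner_le_norm (w k) x
        rwa [hwnorm k, one_mul] at h
      have h10 : R2 / t k ≤ R2 := div_le_self hR2pos.le (ht1 k)
      have h11 : |d k| ≤ R1 + R2 := by
        have h := abs_sub_abs_le_abs_sub (d k) (⟪w k, x⟫)
        rw [abs_sub_comm] at h
        have h12 : |d k| ≤ |⟪w k, x⟫| + |⟪w k, x⟫ - d k| := by linarith
        linarith
      exact Set.mem_Icc.2 (abs_le.1 h11)
    -- compact subsequence
    have hmem2 : ∀ k, (w k, d k) ∈
        (Metric.sphere (0 : Vec m) 1) ×ˢ (Set.Icc (-(R1 + R2)) (R1 + R2)) :=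
      fun k => ⟨mem_sphere_zero_iff_norm.2 (hwnorm k), hdbd k⟩
    obtain ⟨⟨wL, dL⟩, hmemL, φ, hφ, hconv⟩ :=
      ((isCompact_sphere (0 : Vec m) 1).prod isCompact_Icc).tendsto_subseq hmem2
    have hwL : ‖wL‖ = 1 := mem_sphere_zero_iff_norm.1 hmemL.1
    have hwconv : Tendsto (fun k => w (φ k)) atTop (𝓝 wL) := (continuous_fst.tendsto _).comp hconv
    have hdconv : Tendsto (fun k => d (φ k)) atTop (𝓝 dL) := (continuous_snd.tendsto _).comp hconv
    set F : Set (Vec m) := {x : Vec m | |⟪wL, x⟫ - dL| ≤ δ} with hFdef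
    have hFclosed : IsClosed F := by
      have hcont : Continuous fun x : Vec m => |⟪wL, x⟫ - dL| :=
        ((continuous_const.inner continuous_id).sub continuous_const).abs
      exact isClosed_le hcont continuous_const
    -- the limsup bound via portmanteau along the subsequence
    have hgtend : Tendsto g atTop atTop := tendsto_atTop_mono hgk tendsto_id
    have hPgφ : Tendsto (fun k => P (g (φ k))) atTop (𝓝 Pl) :=
      hP.comp (hgtend.comp hφ.tendsto_atTop)
    have hport := ProbabilityMeasure.limsup_measure_closed_le_of_tendsto hPgφ hFclosed
    -- main estimate
    have hμF : ∀ η : ℝ≥0∞, 0 < η → (1 : ℝ≥0∞) - (ε' + η) ≤ μ F := by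
      intro η hη
      obtain ⟨R3, hR3pos, hR3⟩ := BddHelp.eventually_tail_small hP hη
      have hR3' : ∀ᶠ n in atTop, μs n (Metric.ball (0 : Vec m) R3)ᶜ < η := hR3
      have e1 : ∀ᶠ k in atTop, μs (g (φ k)) (Metric.ball (0 : Vec m) R3)ᶜ < η :=
        (hgtend.comp hφ.tendsto_atTop).eventually hR3'
      have e2 : ∀ᶠ k in atTop, ‖w (φ k) - wL‖ < δ / (3 * R3) := by
        obtain ⟨K, hK⟩ := Metric.tendsto_atTop.1 hwconv (δ / (3 * R3)) (by positivity)
        filter_upwards [eventually_ge_atTop K] with k hk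
        have h := hK k hk
        rwa [dist_eq_norm] at h
      have e3 : ∀ᶠ k in atTop, |d (φ k) - dL| < δ / 3 := by
        obtain ⟨K, hK⟩ := Metric.tendsto_atTop.1 hdconv (δ / 3) (by positivity)
        filter_upwards [eventually_ge_atTop K] with k hk
        have h := hK k hk
        rwa [Real.dist_eq] at h
      have e4 : ∀ᶠ k in atTop, R2 / t (φ k) < δ / 3 := by
        obtain ⟨K, hK⟩ := exists_nat_gt (3 * R2 / δ)
        filter_upwards [eventually_ge_atTop K] with k hk
        have hφk : (K : ℝ) ≤ (φ k : ℝ) := by exact_mod_cast hk.trans hφ.le_apply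
        have hlarge : 3 * R2 / δ < t (φ k) := by
          have h := htk (φ k)
          linarith [hK, hφk]
        rw [div_lt_iff₀ (htpos (φ k))]
        rw [div_lt_iff₀ hδ] at hlarge
        nlinarith [hδ, hlarge]
      have hev : ∀ᶠ k in atTop, (1 : ℝ≥0∞) - (ε' + η) ≤ μs (g (φ k)) F := by
        filter_upwards [e1, e2, e3, e4] with k hk1 hk2 hk3 hk4
        have hsubset : E (φ k) ∩ Metric.ball (0 : Vec m) R3 ⊆ F := by
          rintro x ⟨hxE, hxB⟩
          simp only [hEdef, Set.mem_setOf_eq] at hxE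
          rw [Metric.mem_ball, dist_zero_right] at hxB
          simp only [hFdef, Set.mem_setOf_eq]
          have t1 : |⟪wL - w (φ k), x⟫| ≤ ‖wL - w (φ k)‖ * ‖x‖ := abs_real_inner_le_norm _ _
          have t1' : ‖wL - w (φ k)‖ * ‖x‖ ≤ δ / (3 * R3) * R3 := by
            refine mul_le_mul ?_ hxB.le (norm_nonneg _) (by positivity)
            rw [norm_sub_rev]; exact hk2.le
          have hd3 : δ / (3 * R3) * R3 = δ / 3 := by field_simp
          have hiden : ⟪wL, x⟫ - dL =
              ⟪wL - w (φ k), x⟫ + (⟪w (φ k), x⟫ - d (φ k)) + (d (φ k) - dL) := by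
            rw [inner_sub_left]; ring
          calc |⟪wL, x⟫ - dL| ≤ |⟪wL - w (φ k), x⟫| + |⟪w (φ k), x⟫ - d (φ k)|
                + |d (φ k) - dL| := by
                rw [hiden]; exact (abs_add_le _ _).trans (add_le_add_left (abs_add_le _ _) _)
          _ ≤ δ / 3 + δ / 3 + δ / 3 :=
                add_le_add (add_le_add (t1.trans (t1'.trans_eq hd3))
                  (hxE.trans hk4.le)) hk3.le
          _ = δ := by ring
        have hFcs : Fᶜ ⊆ (E (φ k))ᶜ ∪ (Metric.ball (0 : Vec m) R3)ᶜ := by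
          rw [← Set.compl_inter]
          exact Set.compl_subset_compl.2 hsubset
        have hFcm : μs (g (φ k)) Fᶜ ≤ ε' + η :=
          le_trans (measure_mono hFcs) (le_trans (measure_union_le _ _)
            (add_le_add (hEc (φ k)).le hk1.le))
        have hFm : μs (g (φ k)) F = 1 - μs (g (φ k)) Fᶜ := by
          rw [← prob_compl_eq_one_sub hFclosed.measurableSet.compl, compl_compl]
        rw [hFm]
        exact tsub_le_tsub_left hFcm 1
      have hlim : (1 : ℝ≥0∞) - (ε' + η) ≤ limsup (fun k => μs (g (φ k)) F) atTop :=
        le_limsup_of_frequently_le hev.frequently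
      exact hlim.trans hport
    -- conclude contradiction
    have hμF' : (1 : ℝ≥0∞) ≤ μ F + ε' := by
      refine ENNReal.le_of_forall_pos_le_add fun γ hγ hlt => ?_
      have hγpos : (0 : ℝ≥0∞) < γ := by exact_mod_cast hγ
      have h := hμF γ hγpos
      rw [tsub_le_iff_right] at h
      calc (1 : ℝ≥0∞) ≤ μ F + (ε' + γ) := h
      _ = μ F + ε' + γ := by rw [add_assoc]
    have hby := hL1' wL hwL dL
    have hFc1 : μ F ≤ 1 - ε := by
      have h13 : μ Fᶜ = 1 - μ F := prob_compl_eq_one_sub hFclosed.measurableSet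
      rw [h13] at hby
      refine ENNReal.le_sub_of_add_le_left hεtop ?_
      calc ε + μ F ≤ (1 - μ F) + μ F := add_le_add_left hby (μ F)
      _ = 1 := tsub_add_cancel_of_le prob_le_one
    have hcontr : ε ≤ ε' := by
      have h14 : (1 : ℝ≥0∞) ≤ (1 - ε) + ε' := hμF'.trans (add_le_add_left hFc1 ε')
      have h15 : (1 - ε) + ε ≤ (1 - ε) + ε' := by
        rw [tsub_add_cancel_of_le hεle1]
        exact h14
      exact (ENNReal.add_le_add_iff_left
        (lt_of_le_of_lt tsub_le_self ENNReal.one_lt_top).ne).1 h15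
    have hlt2 : ε' < ε := by
      calc ε' = ε / 4 := rfl
      _ ≤ ε / 2 := ENNReal.div_le_div_left (by norm_num) ε
      _ < ε := ENNReal.half_lt_self hεpos.ne' hεtop
    exact absurd hcontr (not_le.2 hlt2)
  -- Part B: shifts bounded
  obtain ⟨CA, hCA⟩ := hA
  have hCA0 : 0 ≤ CA := le_trans (norm_nonneg (mulVecL (A 0))) (hCA 0)
  refine ⟨⟨CA, hCA⟩, ?_⟩
  refine BddHelp.bdd_of_eventually (C := R2 + CA * R1) ?_
  filter_upwards [hR1', hR2'] with n hn1 hn2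
  have hEc : μs n ((fun x => mulVecL (A n) x + a n) ⁻¹' Metric.ball (0 : Vec m) R2)ᶜ < ε' := by
    rw [← Set.preimage_compl, ← hνap n _ Metric.isOpen_ball.measurableSet.compl]
    exact hn2
  have hne : ((fun x => mulVecL (A n) x + a n) ⁻¹' Metric.ball (0 : Vec m) R2
      ∩ Metric.ball (0 : Vec m) R1).Nonempty :=
    BddHelp.nonempty_inter (μs n)
      (lt_of_le_of_lt (add_le_add hEc.le hn1.le) hsum_lt_one)
  obtain ⟨x, hx2, hx1⟩ := hne
  rw [Set.mem_preimage, Metric.mem_ball, dist_zero_right] at hx2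
  rw [Metric.mem_ball, dist_zero_right] at hx1
  have hTx : ‖mulVecL (A n) x‖ ≤ CA * R1 := by
    calc ‖mulVecL (A n) x‖ ≤ ‖mulVecL (A n)‖ * ‖x‖ := (mulVecL (A n)).le_opNorm x
    _ ≤ CA * R1 := mul_le_mul (hCA n) hx1.le (norm_nonneg x) hCA0
  calc ‖a n‖ = ‖(mulVecL (A n) x + a n) - mulVecL (A n) x‖ := by rw [add_sub_cancel_left]
  _ ≤ ‖mulVecL (A n) x + a n‖ + ‖mulVecL (A n) x‖ := norm_sub_le _ _
  _ ≤ R2 + CA * R1 := add_le_add hx2.le hTx
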